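/- arXiv:2412.10965 — 5 statements merged into one kernel-verified Lean document; each statement's English description precedes it below -/
import Mathlib

section
/- Let φ : A → B be a radical-preserving ring homomorphism, i.e. φ(J(A)) ⊆ J(B). Let M be a non-zero finitely generated left A-module with projective cover f : P ↠ M. Then B ⊗_A M = 0 if and only if B ⊗_A P = 0, and if B ⊗_A M ≠ 0 then B ⊗_A f : B ⊗_A P → B ⊗_A M is a projective cover of the B-module B ⊗_A M. -/
universe u

open Function CategoryTheory

/-! ### Ring-theoretic preliminaries -/

/-- The Jacobson radical of a ring (the intersection of all maximal left ideals). -/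
def jac (R : Type u) [Ring R] : Ideal R := Ideal.jacobson (⊥ : Ideal R)

section Modules

variable (R : Type u) [Ring R] (M : Type u) [AddCommGroup M] [Module R M]

/-- A submodule `N` of `M` is superfluous (small) if `N ⊔ L = M` implies `L = M`. -/
def Superfluous (N : Submodule R M) : Prop :=
  ∀ L : Submodule R M, N ⊔ L = ⊤ → L = ⊤

/-- The submodule `I • p` generated by the products of elements of a left ideal `I`
with elements of a submodule `p`. -/
def idealSMul (I : Ideal R) (p : Submodule R M) : Submodule R M :=
  Submodule.span R {x | ∃ a ∈ I, ∃ m ∈ p, x = a • m}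

/-- The powers `J(R)^n • M` of the radical acting on a module. -/
def radPow : ℕ → Submodule R M
  | 0 => ⊤
  | n + 1 => idealSMul R M (jac R) (radPow n)

/-- The Loewy length of a module: the least `n` with `J(R)^n M = 0` (`⊤` if none exists). -/
noncomputable def loewyLength : ℕ∞ :=
  sInf ((↑) '' {n : ℕ | radPow R M n = ⊥})

/-- A projective cover: a linear surjection from a projective module with superfluous kernel. -/
def IsProjectiveCover {P : Type u} [AddCommGroup P] [Module R P]
    (f : P →ₗ[R] M) : Prop :=
  Module.Projective R P ∧ Function.Surjective f ∧ Superfluous R P (LinearMap.ker f)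

/-- A module is indecomposable if it is non-zero and admits no non-trivial
direct sum decomposition. -/
def IsIndecomposableModule : Prop :=
  Nontrivial M ∧ ∀ N₁ N₂ : Submodule R M, IsCompl N₁ N₂ → N₁ = ⊥ ∨ N₂ = ⊥

/-- A submodule is indecomposable if it is non-zero and is not the direct sum of two
non-zero submodules. -/
def IsIndecomposableSubmodule (N : Submodule R M) : Prop :=
  N ≠ ⊥ ∧ ∀ N₁ N₂ : Submodule R M, N₁ ≤ N → N₂ ≤ N → N₁ ⊓ N₂ = ⊥ → N₁ ⊔ N₂ = N →
    N₁ = ⊥ ∨ N₂ = ⊥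

end Modules

section Rings

variable (R : Type u) [Ring R]

/-- A ring is semilocal if it is semisimple modulo its Jacobson radical. -/
def IsSemilocalRing : Prop :=
  IsSemisimpleModule R (R ⧸ jac R)

/-- A ring is semiperfect if it is semilocal and idempotents lift modulo the radical. -/
def IsSemiperfectRing : Prop :=
  IsSemilocalRing R ∧
    ∀ x : R, x * x - x ∈ jac R → ∃ e : R, IsIdempotentElem e ∧ e - x ∈ jac R

/-- A subset `T` of a ring is left T-nilpotent if every sequence in `T` has a
vanishing initial product `a 0 * a 1 * ⋯ * a n`. -/
def IsLeftTNilpotent {R : Type u} [Ring R] (T : Set R) : Prop :=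
  ∀ a : ℕ → R, (∀ i, a i ∈ T) → ∃ n : ℕ, ((List.range (n + 1)).map a).prod = 0

/-- A ring is left perfect if it is semilocal with left T-nilpotent radical. -/
def IsLeftPerfectRing : Prop :=
  IsSemilocalRing R ∧ IsLeftTNilpotent (jac R : Set R)

/-- `I ^ n = 0`: every product of `n` elements of `I` vanishes. -/
def IdealPowZero (I : Ideal R) (n : ℕ) : Prop :=
  ∀ a : ℕ → R, (∀ i, a i ∈ I) → ((List.range n).map a).prod = 0

/-- A ring is semiprimary if it is semilocal and its Jacobson radical is nilpotent. -/
def IsSemiprimaryRing' : Prop :=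
  IsSemilocalRing R ∧ ∃ n : ℕ, IdealPowZero R (jac R) n

/-- A primitive idempotent: a non-zero idempotent admitting no non-trivial
decomposition into orthogonal idempotents. -/
def IsPrimitiveIdem (e : R) : Prop :=
  IsIdempotentElem e ∧ e ≠ 0 ∧
    ∀ f g : R, IsIdempotentElem f → IsIdempotentElem g → f * g = 0 → g * f = 0 →
      f + g = e → f = 0 ∨ g = 0

/-- A complete set of primitive orthogonal idempotents. -/
def IsCompleteOrthogonalPrimitiveSet {ι : Type u} [Fintype ι] (e : ι → R) : Prop :=
  (∀ i, IsPrimitiveIdem R (e i)) ∧ (∀ i j, i ≠ j → e i * e j = 0) ∧ ∑ i, e i = 1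

/-- A complete set of primitive orthogonal idempotents is basic if the corresponding
indecomposable projective modules `R e i` are pairwise non-isomorphic. -/
def IsBasicSet {ι : Type u} [Fintype ι] (e : ι → R) : Prop :=
  IsCompleteOrthogonalPrimitiveSet R e ∧
    ∀ i j, Nonempty ((Ideal.span {e i}) ≃ₗ[R] (Ideal.span {e j})) → i = j

/-- A ring is basic if it admits a complete set of primitive orthogonal idempotents
that is basic. -/
def IsBasicRing : Prop :=
  ∃ (ι : Type u) (_ : Fintype ι) (e : ι → R), IsBasicSet R e

end Rings

/-! ### Homological dimensions -/

section Dim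

variable (A : Type u) [Ring A]

/-- `projDimLE A n M`: the `A`-module `M` admits a projective resolution of length `≤ n`. -/
def projDimLE : ℕ → ModuleCat.{u} A → Prop
  | 0, M => Projective M
  | n + 1, M => ∃ (K P : ModuleCat.{u} A) (f : K ⟶ P) (g : P ⟶ M),
      Projective P ∧ Function.Injective f ∧ Function.Surjective g ∧
      (∀ x, g (f x) = 0) ∧ (∀ y, g y = 0 → ∃ x, f x = y) ∧ projDimLE n K

/-- The projective dimension of a module, as an extended natural number. -/
noncomputable def projDim (M : ModuleCat.{u} A) : ℕ∞ :=
  sInf ((↑) '' {n : ℕ | projDimLE A n M})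

/-- `injDimLE A n M`: the `A`-module `M` admits an injective coresolution of length `≤ n`. -/
def injDimLE : ℕ → ModuleCat.{u} A → Prop
  | 0, M => Injective M
  | n + 1, M => ∃ (I C : ModuleCat.{u} A) (f : M ⟶ I) (g : I ⟶ C),
      Injective I ∧ Function.Injective f ∧ Function.Surjective g ∧
      (∀ x, g (f x) = 0) ∧ (∀ y, g y = 0 → ∃ x, f x = y) ∧ injDimLE n C

/-- The injective dimension of a module, as an extended natural number. -/
noncomputable def injDim (M : ModuleCat.{u} A) : ℕ∞ :=
  sInf ((↑) '' {n : ℕ | injDimLE A n M})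

/-- The left global dimension of a ring. -/
noncomputable def glDim : ℕ∞ :=
  ⨆ M : ModuleCat.{u} A, projDim A M

/-- The little finitistic dimension: the supremum of the projective dimensions of
finitely generated left modules of finite projective dimension. -/
noncomputable def finDim : ℕ∞ :=
  ⨆ (M : ModuleCat.{u} A) (_ : Module.Finite A M ∧ projDim A M ≠ ⊤), projDim A M

/-- The big finitistic dimension: the supremum of the projective dimensions of
all left modules of finite projective dimension. -/
noncomputable def FinDim : ℕ∞ :=
  ⨆ (M : ModuleCat.{u} A) (_ : projDim A M ≠ ⊤), projDim A M

end Dim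

/-! ### Induction along a ring homomorphism -/

section Tensor

variable {A B : Type u} [Ring A] [Ring B] (φ : A →+* B)

/-- The relations defining `B ⊗_A M` inside `B ⊗_ℤ M`. -/
def TensorRel (M : Type u) [AddCommGroup M] [Module A M] :
    Submodule B (TensorProduct ℤ B M) :=
  Submodule.span B
    {x | ∃ (b : B) (a : A) (m : M), x = (b * φ a) ⊗ₜ[ℤ] m - b ⊗ₜ[ℤ] (a • m)}

/-- The induced module `B ⊗_A M` along a ring homomorphism `φ : A →+* B`, realized
as the quotient of `B ⊗_ℤ M` by the bilinearity relations for the `A`-actions. -/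
def TensorB (M : Type u) [AddCommGroup M] [Module A M] : Type u :=
  TensorProduct ℤ B M ⧸ TensorRel φ M

noncomputable instance (M : Type u) [AddCommGroup M] [Module A M] :
    AddCommGroup (TensorB φ M) :=
  inferInstanceAs (AddCommGroup (TensorProduct ℤ B M ⧸ TensorRel φ M))

noncomputable instance (M : Type u) [AddCommGroup M] [Module A M] :
    Module B (TensorB φ M) :=
  inferInstanceAs (Module B (TensorProduct ℤ B M ⧸ TensorRel φ M))

/-- The map induced on `B ⊗_ℤ ·` by an `A`-linear map `f`. -/
noncomputable def tmapAux {M N : Type u} [AddCommGroup M] [Module A M]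
    [AddCommGroup N] [Module A N] (f : M →ₗ[A] N) :
    TensorProduct ℤ B M →ₗ[B] TensorProduct ℤ B N :=
  TensorProduct.AlgebraTensorModule.map (LinearMap.id : B →ₗ[B] B)
    f.toAddMonoidHom.toIntLinearMap

/-- The induction functor on morphisms: `B ⊗_A f : B ⊗_A M →ₗ[B] B ⊗_A N`. -/
noncomputable def tmap {M N : Type u} [AddCommGroup M] [Module A M]
    [AddCommGroup N] [Module A N] (f : M →ₗ[A] N) :
    TensorB φ M →ₗ[B] TensorB φ N :=
  Submodule.mapQ (TensorRel φ M) (TensorRel φ N) (tmapAux (B := B) f) (by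
    rw [TensorRel, Submodule.span_le]
    rintro x ⟨b, a, m, rfl⟩
    have : (tmapAux (B := B) f) ((b * φ a) ⊗ₜ[ℤ] m - b ⊗ₜ[ℤ] (a • m)) =
        (b * φ a) ⊗ₜ[ℤ] (f m) - b ⊗ₜ[ℤ] (a • f m) := by
      simp [tmapAux, map_smul]
    rw [SetLike.mem_coe, Submodule.mem_comap, this]
    exact Submodule.subset_span ⟨b, a, f m, rfl⟩)

/-- `torVanish φ n M` encodes the vanishing `Tor_{n+1}^A(B, M) = 0`, via dimension
shifting through short exact sequences `0 → K → P → M → 0` with `P` projective. -/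
def torVanish : ℕ → ModuleCat.{u} A → Prop
  | 0, M => ∀ (K P : ModuleCat.{u} A) (f : K ⟶ P) (g : P ⟶ M),
      Projective P → Function.Injective f → Function.Surjective g →
      (∀ x, g (f x) = 0) → (∀ y, g y = 0 → ∃ x, f x = y) →
      Function.Injective (tmap φ (f.hom : ↥K →ₗ[A] ↥P))
  | n + 1, M => ∀ (K P : ModuleCat.{u} A) (f : K ⟶ P) (g : P ⟶ M),
      Projective P → Function.Injective f → Function.Surjective g →
      (∀ x, g (f x) = 0) → (∀ y, g y = 0 → ∃ x, f x = y) →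
      torVanish n K

/-- The flat dimension of `B` as a right `A`-module along `φ`, characterized by Tor
vanishing: `flatdim B_A ≤ d` iff `Tor_n^A(B, M) = 0` for all `n > d` and all left
`A`-modules `M`. -/
noncomputable def flatDimR : ℕ∞ :=
  sInf ((↑) '' {d : ℕ | ∀ (M : ModuleCat.{u} A) (n : ℕ), d ≤ n → torVanish φ n M})

/-- `B` as a right `A`-module (i.e. a left `Aᵐᵒᵖ`-module) via `φ`. -/
noncomputable def rightModule : Module Aᵐᵒᵖ B :=
  Module.compHom B (RingHom.op φ)

/-- The projective dimension of `B` as a right `A`-module via `φ`. -/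
noncomputable def pdBA : ℕ∞ :=
  letI := rightModule φ
  projDim Aᵐᵒᵖ (ModuleCat.of Aᵐᵒᵖ B)

end Tensor

section Infra

namespace S6

variable {A B : Type u} [Ring A] [Ring B] (φ : A →+* B)
variable {M : Type u} [AddCommGroup M] [Module A M]
variable {N : Type u} [AddCommGroup N] [Module A N]

/-- The class of a pure tensor in `TensorB`. -/
noncomputable def tmk (b : B) (m : M) : TensorB φ M :=
  Submodule.Quotient.mk (b ⊗ₜ[ℤ] m)

lemma smul_tmk (c b : B) (m : M) : c • tmk φ b m = tmk φ (c * b) m := by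
  show (c • Submodule.Quotient.mk (b ⊗ₜ[ℤ] m) : TensorProduct ℤ B M ⧸ TensorRel φ M) = tmk φ (c * b) m
  refine Eq.trans (Submodule.Quotient.mk_smul _ _ _).symm ?_
  unfold tmk
  congr 1

lemma tmk_add_left (b c : B) (m : M) :
    tmk φ (b + c) m = tmk φ b m + tmk φ c m := by
  unfold tmk
  refine Eq.trans ?_ (Submodule.Quotient.mk_add _)
  congr 1
  exact TensorProduct.add_tmul b c m

lemma tmk_add_right (b : B) (m m' : M) :
    tmk φ b (m + m') = tmk φ b m + tmk φ b m' := by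
  unfold tmk
  refine Eq.trans ?_ (Submodule.Quotient.mk_add _)
  congr 1
  exact TensorProduct.tmul_add b m m'

lemma tmk_zero (b : B) : tmk φ b (0 : M) = 0 := by
  unfold tmk
  rw [TensorProduct.tmul_zero]
  exact Submodule.Quotient.mk_zero _

lemma tmk_sub_right (b : B) (m m' : M) :
    tmk φ b (m - m') = tmk φ b m - tmk φ b m' := by
  unfold tmk
  refine Eq.trans ?_ (Submodule.Quotient.mk_sub _)
  congr 1
  exact TensorProduct.tmul_sub b m m'

lemma tmk_rel (b : B) (a : A) (m : M) :
    tmk φ (b * φ a) m = tmk φ b (a • m) := by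
  unfold tmk
  show (Submodule.Quotient.mk ((b * φ a) ⊗ₜ[ℤ] m) : TensorProduct ℤ B M ⧸ TensorRel φ M) = Submodule.Quotient.mk (b ⊗ₜ[ℤ] (a • m))
  rw [Submodule.Quotient.eq]
  exact Submodule.subset_span ⟨b, a, m, rfl⟩

lemma tmk_smul (a : A) (m : M) : tmk φ 1 (a • m) = φ a • tmk φ 1 m := by
  rw [smul_tmk, mul_one, ← one_mul (φ a), tmk_rel]

lemma mem_span_tmk (x : TensorB φ M) :
    x ∈ Submodule.span B (Set.range (tmk φ (1 : B) : M → TensorB φ M)) := by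
  obtain ⟨t, rfl⟩ := Submodule.Quotient.mk_surjective _ x
  induction t using TensorProduct.induction_on with
  | zero =>
    rw [Submodule.Quotient.mk_zero]
    exact Submodule.zero_mem _
  | tmul b m =>
    have : (Submodule.Quotient.mk (b ⊗ₜ[ℤ] m) : TensorB φ M) = b • tmk φ 1 m := by
      rw [smul_tmk, mul_one]; rfl
    rw [this]
    exact Submodule.smul_mem _ _ (Submodule.subset_span ⟨m, rfl⟩)
  | add x y hx hy =>
    rw [Submodule.Quotient.mk_add]
    exact Submodule.add_mem _ hx hy

lemma hom_ext {X : Type u} [AddCommGroup X] [Module B X]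
    {g h : TensorB φ M →ₗ[B] X} (H : ∀ m : M, g (tmk φ 1 m) = h (tmk φ 1 m)) :
    g = h := by
  ext x
  have hx := mem_span_tmk φ x
  induction hx using Submodule.span_induction with
  | mem y hy => obtain ⟨m, rfl⟩ := hy; exact H m
  | zero => simp
  | add y z _ _ hy hz => rw [map_add, map_add, hy, hz]
  | smul c y _ hy => rw [map_smul, map_smul, hy]

/-- Lift an additive `φ`-semilinear map to a `B`-linear map out of `TensorB`. -/
noncomputable def tlift {X : Type u} [AddCommGroup X] [Module B X] (g : M →+ X)
    (hg : ∀ (a : A) (m : M), g (a • m) = φ a • g m) : TensorB φ M →ₗ[B] X :=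
  Submodule.liftQ _ (TensorProduct.AlgebraTensorModule.lift
    (LinearMap.toSpanSingleton B (M →ₗ[ℤ] X) g.toIntLinearMap)) (by
      rw [TensorRel, Submodule.span_le]
      rintro x ⟨b, a, m, rfl⟩
      rw [SetLike.mem_coe, LinearMap.mem_ker, map_sub]
      rw [TensorProduct.AlgebraTensorModule.lift_tmul,
        TensorProduct.AlgebraTensorModule.lift_tmul]
      rw [LinearMap.toSpanSingleton_apply, LinearMap.toSpanSingleton_apply]
      rw [LinearMap.smul_apply, LinearMap.smul_apply]
      show (b * φ a) • g m - b • g (a • m) = 0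
      rw [hg, mul_smul, sub_self])

lemma tlift_tmk {X : Type u} [AddCommGroup X] [Module B X] (g : M →+ X)
    (hg : ∀ (a : A) (m : M), g (a • m) = φ a • g m) (b : B) (m : M) :
    tlift φ g hg (tmk φ b m) = b • g m := by
  unfold tlift tmk
  erw [Submodule.liftQ_apply]
  rw [TensorProduct.AlgebraTensorModule.lift_tmul,
    LinearMap.toSpanSingleton_apply, LinearMap.smul_apply]
  rfl

lemma tmap_tmk (f : M →ₗ[A] N) (b : B) (m : M) :
    tmap φ f (tmk φ b m) = tmk φ b (f m) := by
  unfold tmap tmk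
  erw [Submodule.mapQ_apply]
  congr 1

lemma tmap_surjective (f : M →ₗ[A] N) (hf : Function.Surjective f) :
    Function.Surjective (tmap φ f) := by
  intro x
  have hx := mem_span_tmk φ x
  induction hx using Submodule.span_induction with
  | mem y hy =>
    obtain ⟨n, rfl⟩ := hy
    obtain ⟨m, rfl⟩ := hf n
    exact ⟨tmk φ 1 m, tmap_tmk φ f 1 m⟩
  | zero => exact ⟨0, map_zero _⟩
  | add y z _ _ hy hz =>
    obtain ⟨u, rfl⟩ := hy; obtain ⟨v, rfl⟩ := hz
    exact ⟨u + v, map_add _ u v⟩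
  | smul c y _ hy =>
    obtain ⟨u, rfl⟩ := hy
    exact ⟨c • u, map_smul _ c u⟩

end S6

end Infra
section Rad

namespace S6

variable {B : Type u} [Ring B] {X : Type u} [AddCommGroup X] [Module B X]

lemma jac_smul_mem_of_coatom {m : Submodule B X} (hm : IsCoatom m)
    {j : B} (hj : j ∈ jac B) (z : X) : j • z ∈ m := by
  by_cases hz : z ∈ m
  · exact m.smul_mem j hz
  · set m' : Ideal B := Submodule.comap (LinearMap.toSpanSingleton B X z) m with hm'def
    have hmem : ∀ b : B, b ∈ m' ↔ b • z ∈ m := fun b => Iff.rfl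
    have hmax : m'.IsMaximal := by
      constructor
      constructor
      · intro htop
        exact hz (by simpa using (hmem 1).mp (htop ▸ Submodule.mem_top))
      · intro I hI
        obtain ⟨b0, hb0I, hb0⟩ := SetLike.exists_of_lt hI
        have hb0z : b0 • z ∉ m := fun h => hb0 ((hmem b0).mpr h)
        have h1 : m ⊔ Submodule.span B {b0 • z} = ⊤ :=
          hm.2 _ (left_lt_sup.mpr ((Submodule.span_singleton_le_iff_mem _ _).not.mpr hb0z))
        have hzmem : z ∈ m ⊔ Submodule.span B {b0 • z} := h1.symm ▸ Submodule.mem_top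
        obtain ⟨u, hu, w, hw, huw⟩ := Submodule.mem_sup.mp hzmem
        obtain ⟨c, rfl⟩ := Submodule.mem_span_singleton.mp hw
        have hkey : (1 - c * b0) ∈ m' := by
          rw [hmem]
          have hu' : u = z - c • (b0 • z) := eq_sub_of_add_eq huw
          have : (1 - c * b0) • z = u := by
            rw [hu', sub_smul, one_smul, mul_smul]
          rw [this]; exact hu
        have h1I : (1 : B) ∈ I := by
          have : (1 : B) = (1 - c * b0) + c * b0 := by abel
          rw [this]
          exact I.add_mem (le_of_lt hI hkey) (I.smul_mem c hb0I)
        exact (Ideal.eq_top_iff_one I).mpr h1I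
    have hjle : jac B ≤ m' := sInf_le ⟨bot_le, hmax⟩
    exact (hmem j).mp (hjle hj)

lemma nakayama [Module.Finite B X]
    (h : (⊤ : Submodule B X) ≤ idealSMul B X (jac B) ⊤) (x : X) : x = 0 := by
  have hco : IsCoatomic (Submodule B X) :=
    CompleteLattice.coatomic_of_top_compact
      ((Submodule.fg_iff_compact _).mp Module.Finite.fg_top)
  rcases hco.eq_top_or_exists_le_coatom (⊥ : Submodule B X) with h0 | ⟨m, hm, -⟩
  · exact (Submodule.mem_bot B).mp (h0.symm ▸ Submodule.mem_top)
  · exfalso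
    have hle : idealSMul B X (jac B) ⊤ ≤ m := by
      rw [idealSMul, Submodule.span_le]
      rintro y ⟨a, ha, z, -, rfl⟩
      exact jac_smul_mem_of_coatom hm ha z
    exact hm.1 (top_le_iff.mp (le_trans h hle))

lemma superfluous_of_le_radical [Module.Finite B X]
    {T : Submodule B X} (hT : T ≤ idealSMul B X (jac B) ⊤) : Superfluous B X T := by
  intro L hL
  haveI : Module.Finite B (X ⧸ L) :=
    Module.Finite.of_surjective L.mkQ (Submodule.mkQ_surjective L)
  have hq : ∀ y : X ⧸ L, y = 0 := by
    apply nakayama (B := B)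
    intro y _
    obtain ⟨x, rfl⟩ := Submodule.mkQ_surjective L y
    have hx : x ∈ T ⊔ L := hL.symm ▸ Submodule.mem_top
    obtain ⟨t, ht, l, hl, rfl⟩ := Submodule.mem_sup.mp hx
    have hl0 : L.mkQ l = 0 := by
      rw [Submodule.mkQ_apply, Submodule.Quotient.mk_eq_zero]; exact hl
    rw [map_add, hl0, add_zero]
    have hmap : Submodule.map L.mkQ (idealSMul B X (jac B) ⊤) ≤
        idealSMul B (X ⧸ L) (jac B) ⊤ := by
      rw [idealSMul, idealSMul, Submodule.map_span, Submodule.span_le]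
      rintro y ⟨w, ⟨a, ha, z, -, rfl⟩, rfl⟩
      exact Submodule.subset_span ⟨a, ha, L.mkQ z, Submodule.mem_top, (map_smul L.mkQ a z).symm⟩
    exact hmap ⟨t, hT ht, rfl⟩
  rw [Submodule.eq_top_iff']
  intro x
  have := hq (L.mkQ x)
  rw [Submodule.mkQ_apply, Submodule.Quotient.mk_eq_zero] at this
  exact this

variable {A : Type u} [Ring A] {P : Type u} [AddCommGroup P] [Module A P]

lemma apply_mem_jac_of_superfluous {K : Submodule A P} (hK : Superfluous A P K)
    {k : P} (hk : k ∈ K) (α : P →ₗ[A] A) : α k ∈ jac A := by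
  show α k ∈ sInf {J : Ideal A | ⊥ ≤ J ∧ J.IsMaximal}
  rw [Submodule.mem_sInf]
  rintro m ⟨-, hm⟩
  by_contra hαk
  set L : Submodule A P := Submodule.comap α m with hLdef
  have hsup : K ⊔ L = ⊤ := by
    rw [Submodule.eq_top_iff']
    intro x
    have h1 : m ⊔ Submodule.span A {α k} = ⊤ :=
      hm.out.2 _ (left_lt_sup.mpr ((Submodule.span_singleton_le_iff_mem _ _).not.mpr hαk))
    have hx : α x ∈ m ⊔ Submodule.span A {α k} := h1.symm ▸ Submodule.mem_top
    obtain ⟨u, hu, w, hw, huw⟩ := Submodule.mem_sup.mp hx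
    obtain ⟨c, rfl⟩ := Submodule.mem_span_singleton.mp hw
    refine Submodule.mem_sup.mpr ⟨c • k, K.smul_mem c hk, x - c • k, ?_, by abel⟩
    show α (x - c • k) ∈ m
    have hu' : u = α x - c • α k := eq_sub_of_add_eq huw
    have : α (x - c • k) = u := by
      rw [map_sub, map_smul, hu']
    rw [this]; exact hu
  have hLtop := hK L hsup
  exact hαk (show k ∈ L from hLtop.symm ▸ Submodule.mem_top)

lemma mem_idealSMul_of_superfluous (hproj : Module.Projective A P)
    {K : Submodule A P} (hK : Superfluous A P K) {k : P} (hk : k ∈ K) :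
    k ∈ idealSMul A P (jac A) ⊤ := by
  obtain ⟨s, hs⟩ := Module.projective_def.mp hproj
  have hk' : Finsupp.linearCombination A (id : P → P) (s k) = k := hs k
  rw [← hk', Finsupp.linearCombination_apply, Finsupp.sum]
  apply Submodule.sum_mem
  intro p hp
  have hcoef : (s k) p ∈ jac A :=
    apply_mem_jac_of_superfluous hK hk ((Finsupp.lapply p).comp s)
  exact Submodule.subset_span ⟨(s k) p, hcoef, p, Submodule.mem_top, rfl⟩

end S6

end Rad
section Comb

namespace S6

variable {A B : Type u} [Ring A] [Ring B] (φ : A →+* B)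
variable {M : Type u} [AddCommGroup M] [Module A M]
variable {P : Type u} [AddCommGroup P] [Module A P]

/-- The `A`-submodule of elements whose basic tensor lands in a given `B`-submodule. -/
def pullSub (V : Submodule B (TensorB φ M)) : Submodule A M where
  carrier := {m | tmk φ 1 m ∈ V}
  add_mem' := fun {p q} hp hq => by
    show tmk φ 1 (p + q) ∈ V
    rw [tmk_add_right]; exact V.add_mem hp hq
  zero_mem' := by
    show tmk φ 1 (0 : M) ∈ V
    rw [tmk_zero]; exact V.zero_mem
  smul_mem' := fun a p hp => by
    show tmk φ 1 (a • p) ∈ V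
    rw [tmk_smul]; exact V.smul_mem _ hp

lemma tmk_mem_idealSMul (hrad : ∀ a ∈ jac A, φ a ∈ jac B)
    {k : M} (hk : k ∈ idealSMul A M (jac A) ⊤) :
    tmk φ 1 k ∈ idealSMul B (TensorB φ M) (jac B) ⊤ := by
  have hle : idealSMul A M (jac A) ⊤ ≤
      pullSub φ (idealSMul B (TensorB φ M) (jac B) ⊤) := by
    rw [idealSMul, Submodule.span_le]
    rintro x ⟨a, ha, p, -, rfl⟩
    show tmk φ 1 (a • p) ∈ idealSMul B (TensorB φ M) (jac B) ⊤
    rw [tmk_smul]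
    exact Submodule.subset_span ⟨φ a, hrad a ha, tmk φ 1 p, Submodule.mem_top, rfl⟩
  exact hle hk

lemma tensorB_finite [Module.Finite A M] : Module.Finite B (TensorB φ M) := by
  obtain ⟨S, hS⟩ := Module.Finite.fg_top (R := A) (M := M)
  set V := Submodule.span B (tmk φ (1 : B) '' (S : Set M)) with hV
  have hU : (⊤ : Submodule A M) ≤ pullSub φ V := by
    rw [← hS, Submodule.span_le]
    intro p hp
    exact Submodule.subset_span ⟨p, hp, rfl⟩
  have htop : V = ⊤ := by
    rw [Submodule.eq_top_iff']
    intro x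
    have hx := mem_span_tmk φ x
    induction hx using Submodule.span_induction with
    | mem y hy =>
      obtain ⟨m, rfl⟩ := hy
      exact hU Submodule.mem_top
    | zero => exact V.zero_mem
    | add y z _ _ hy hz => exact V.add_mem hy hz
    | smul c y _ hy => exact V.smul_mem c hy
  exact ⟨Submodule.fg_def.mpr
    ⟨tmk φ 1 '' (S : Set M), (S.finite_toSet).image _, htop⟩⟩

lemma ker_tmap_le {N : Type u} [AddCommGroup N] [Module A N]
    (f : M →ₗ[A] N) (hf : Function.Surjective f) :
    LinearMap.ker (tmap φ f) ≤
      Submodule.span B {x : TensorB φ M | ∃ k ∈ LinearMap.ker f, x = tmk φ 1 k} := by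
  set T := Submodule.span B
    {x : TensorB φ M | ∃ k ∈ LinearMap.ker f, x = tmk φ 1 k} with hTdef
  set σ := Function.surjInv hf with hσdef
  have hfσ : ∀ n : N, f (σ n) = n := Function.surjInv_eq hf
  have hwell : ∀ p q : M, f p = f q → T.mkQ (tmk φ 1 p) = T.mkQ (tmk φ 1 q) := by
    intro p q hpq
    rw [← sub_eq_zero, ← map_sub, ← tmk_sub_right]
    rw [Submodule.mkQ_apply, Submodule.Quotient.mk_eq_zero]
    refine Submodule.subset_span ⟨p - q, ?_, rfl⟩
    rw [LinearMap.mem_ker, map_sub, hpq, sub_self]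
  let g : N →+ (TensorB φ M ⧸ T) :=
    { toFun := fun n => T.mkQ (tmk φ 1 (σ n))
      map_zero' := by
        show T.mkQ (tmk φ 1 (σ 0)) = 0
        rw [hwell (σ 0) 0 (by rw [hfσ, map_zero]), tmk_zero, map_zero]
      map_add' := fun n n' => by
        show T.mkQ (tmk φ 1 (σ (n + n'))) =
          T.mkQ (tmk φ 1 (σ n)) + T.mkQ (tmk φ 1 (σ n'))
        rw [hwell (σ (n + n')) (σ n + σ n') (by rw [hfσ, map_add, hfσ, hfσ]),
          tmk_add_right, map_add] }
  have hg : ∀ (a : A) (n : N), g (a • n) = φ a • g n := by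
    intro a n
    show T.mkQ (tmk φ 1 (σ (a • n))) = φ a • T.mkQ (tmk φ 1 (σ n))
    rw [hwell (σ (a • n)) (a • σ n) (by rw [hfσ, map_smul, hfσ]), tmk_smul, map_smul]
  have hcomp : (tlift φ g hg).comp (tmap φ f) = T.mkQ := by
    apply hom_ext φ
    intro m
    rw [LinearMap.comp_apply, tmap_tmk, tlift_tmk, one_smul]
    show T.mkQ (tmk φ 1 (σ (f m))) = T.mkQ (tmk φ 1 m)
    exact hwell (σ (f m)) m (hfσ (f m))
  intro x hx
  have h0 : T.mkQ x = 0 := by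
    rw [← hcomp, LinearMap.comp_apply, LinearMap.mem_ker.mp hx, map_zero]
  rwa [Submodule.mkQ_apply, Submodule.Quotient.mk_eq_zero] at h0

lemma tensorB_projective (hP : Module.Projective A P) :
    Module.Projective B (TensorB φ P) := by
  rw [Module.projective_def']
  letI : Module A (TensorB φ P →₀ B) := Module.compHom _ φ
  letI : Module A (TensorB φ P) := Module.compHom _ φ
  let π : (TensorB φ P →₀ B) →ₗ[B] TensorB φ P := Finsupp.linearCombination B id
  have hπ : Function.Surjective π := fun y => ⟨Finsupp.single y 1, by simp [π]⟩
  let πA : (TensorB φ P →₀ B) →ₗ[A] TensorB φ P :=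
    { toFun := π
      map_add' := π.map_add
      map_smul' := fun a x => π.map_smul (φ a) x }
  let j : P →ₗ[A] TensorB φ P :=
    { toFun := fun p => tmk φ 1 p
      map_add' := fun p q => tmk_add_right φ 1 p q
      map_smul' := fun a p => tmk_smul φ a p }
  haveI := hP
  obtain ⟨t, ht⟩ := Module.projective_lifting_property πA j hπ
  have ht' : ∀ (a : A) (p : P), t.toAddMonoidHom (a • p) = φ a • t.toAddMonoidHom p := fun a p => t.map_smul a p
  refine ⟨tlift φ t.toAddMonoidHom ht', ?_⟩
  apply hom_ext φ
  intro p
  rw [LinearMap.comp_apply, tlift_tmk, one_smul, LinearMap.id_apply]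
  exact LinearMap.congr_fun ht p

lemma finite_of_cover {N : Type u} [AddCommGroup N] [Module A N] [Module.Finite A N]
    (f : P →ₗ[A] N) (hsurj : Function.Surjective f)
    (hsup : Superfluous A P (LinearMap.ker f)) : Module.Finite A P := by
  obtain ⟨S, hS⟩ := Module.Finite.fg_top (R := A) (M := N)
  set σ := Function.surjInv hsurj with hσdef
  set L := Submodule.span A (σ '' (S : Set N)) with hLdef
  have hmap : Submodule.map f L = ⊤ := by
    have hcomp : ⇑f ∘ σ = id := funext fun n => Function.surjInv_eq hsurj n
    rw [hLdef, Submodule.map_span, ← Set.image_comp, hcomp, Set.image_id, hS]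
  have hsupL : LinearMap.ker f ⊔ L = ⊤ := by
    rw [Submodule.eq_top_iff']
    intro x
    have hfx : f x ∈ Submodule.map f L := hmap.symm ▸ Submodule.mem_top
    obtain ⟨y, hy, hyx⟩ := hfx
    refine Submodule.mem_sup.mpr ⟨x - y, ?_, y, hy, by abel⟩
    rw [LinearMap.mem_ker, map_sub, hyx, sub_self]
  have hLtop := hsup L hsupL
  refine ⟨?_⟩
  rw [← hLtop]
  exact Submodule.fg_def.mpr ⟨σ '' (S : Set N), (S.finite_toSet).image σ, rfl⟩

end S6

end Comb
/-- Induction along a radical-preserving homomorphism preserves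
projective covers of finitely generated modules. -/
theorem statement_6 {A B : Type u} [Ring A] [Ring B] (φ : A →+* B)
    (hrad : ∀ a ∈ jac A, φ a ∈ jac B)
    (M P : Type u) [AddCommGroup M] [Module A M] [AddCommGroup P] [Module A P]
    [Module.Finite A M] (hM : ∃ m : M, m ≠ 0)
    (f : P →ₗ[A] M) (hf : IsProjectiveCover A M f) :
    ((∀ x : TensorB φ M, x = 0) ↔ (∀ x : TensorB φ P, x = 0)) ∧
      ((∃ x : TensorB φ M, x ≠ 0) →
        IsProjectiveCover B (TensorB φ M) (tmap φ f)) := by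
  obtain ⟨hproj, hsurj, hsup⟩ := hf
  haveI hPfin : Module.Finite A P := S6.finite_of_cover f hsurj hsup
  haveI hBPfin : Module.Finite B (TensorB φ P) := S6.tensorB_finite φ
  have hkerle : LinearMap.ker (tmap φ f) ≤ idealSMul B (TensorB φ P) (jac B) ⊤ := by
    refine le_trans (S6.ker_tmap_le φ f hsurj) ?_
    rw [Submodule.span_le]
    rintro x ⟨k, hk, rfl⟩
    exact S6.tmk_mem_idealSMul φ hrad (S6.mem_idealSMul_of_superfluous hproj hsup hk)
  constructor
  · constructor
    · intro h0 x
      have htop : (⊤ : Submodule B (TensorB φ P)) ≤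
          idealSMul B (TensorB φ P) (jac B) ⊤ :=
        fun y _ => hkerle (LinearMap.mem_ker.mpr (h0 _))
      exact S6.nakayama (B := B) htop x
    · intro h0 x
      obtain ⟨y, rfl⟩ := S6.tmap_surjective φ f hsurj x
      rw [h0 y, map_zero]
  · intro _
    exact ⟨S6.tensorB_projective φ hproj, S6.tmap_surjective φ f hsurj,
      S6.superfluous_of_le_radical hkerle⟩
end

section
/- Let φ : A → B be a ring homomorphism. If for every finitely generated left A-module M with projective cover f : P → M the map B ⊗_A f is either a projective cover of the non-zero module B ⊗_A M, or both B ⊗_A M and B ⊗_A P are zero, then φ is radical-preserving, i.e. φ(J(A)) ⊆ J(B). -/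
universe u

open Function CategoryTheory

section AuxStatement8

variable {A B : Type u} [Ring A] [Ring B] (φ : A →+* B)

/-- Evaluation map `B ⊗_ℤ A → B`, `b ⊗ a ↦ b * φ a`. -/
noncomputable def psiAux : TensorProduct ℤ B A →ₗ[B] B :=
  TensorProduct.AlgebraTensorModule.lift
    { toFun := fun b => b • φ.toAddMonoidHom.toIntLinearMap
      map_add' := fun x y => add_smul x y _
      map_smul' := fun c b => by simp [smul_eq_mul, mul_smul] }

lemma psiAux_tmul (b : B) (a : A) : psiAux φ (b ⊗ₜ[ℤ] a) = b * φ a := by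
  simp [psiAux, smul_eq_mul]

/-- The evaluation map descends to `B ⊗_A A → B`. -/
noncomputable def psiT : TensorB φ A →ₗ[B] B :=
  Submodule.liftQ (TensorRel φ A) (psiAux φ) (by
    rw [TensorRel, Submodule.span_le]
    rintro x ⟨b, a, m, rfl⟩
    simp only [SetLike.mem_coe, LinearMap.mem_ker, map_sub, psiAux_tmul, smul_eq_mul,
      map_mul, mul_assoc, sub_self])

/-- The map `B → B ⊗_A A`, `b ↦ b ⊗ 1`. -/
noncomputable def iotT : B →ₗ[B] TensorB φ A where
  toFun b := Submodule.Quotient.mk (b ⊗ₜ[ℤ] (1 : A))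
  map_add' x y := by
    show Submodule.Quotient.mk ((x + y) ⊗ₜ[ℤ] (1 : A)) =
      Submodule.Quotient.mk (x ⊗ₜ[ℤ] (1 : A)) + Submodule.Quotient.mk (y ⊗ₜ[ℤ] (1 : A))
    rw [TensorProduct.add_tmul]
    rfl
  map_smul' c b := by
    rw [RingHom.id_apply]
    show (Submodule.Quotient.mk ((c • b) ⊗ₜ[ℤ] (1 : A)) : TensorProduct ℤ B A ⧸ TensorRel φ A) =
      c • (Submodule.Quotient.mk (b ⊗ₜ[ℤ] (1 : A)) : TensorProduct ℤ B A ⧸ TensorRel φ A)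
    rw [← Submodule.Quotient.mk_smul, TensorProduct.smul_tmul']

lemma psiT_iotT (b : B) : psiT φ (iotT φ b) = b := by
  show psiAux φ (b ⊗ₜ[ℤ] (1 : A)) = b
  rw [psiAux_tmul, map_one, mul_one]

lemma iotT_injective : Function.Injective (iotT φ) :=
  Function.LeftInverse.injective (psiT_iotT φ)

lemma iotT_surjective : Function.Surjective (iotT φ) := by
  intro x
  obtain ⟨y, rfl⟩ := Submodule.Quotient.mk_surjective _ x
  induction y using TensorProduct.induction_on with
  | zero => exact ⟨0, by rw [map_zero]; rfl⟩
  | tmul b m =>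
      refine ⟨b * φ m, ?_⟩
      show Submodule.Quotient.mk _ = Submodule.Quotient.mk _
      rw [Submodule.Quotient.eq]
      exact Submodule.subset_span ⟨b, m, 1, by rw [smul_eq_mul, mul_one]⟩
  | add u v hu hv =>
      obtain ⟨c, hc⟩ := hu; obtain ⟨d, hd⟩ := hv
      exact ⟨c + d, by rw [map_add, hc, hd]; rfl⟩

lemma tmap_mk {M N : Type u} [AddCommGroup M] [Module A M] [AddCommGroup N] [Module A N]
    (f : M →ₗ[A] N) (b : B) (m : M) :
    tmap φ f (Submodule.Quotient.mk (b ⊗ₜ[ℤ] m)) = Submodule.Quotient.mk (b ⊗ₜ[ℤ] f m) := by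
  show (Submodule.Quotient.mk (tmapAux (B := B) f (b ⊗ₜ[ℤ] m)) : TensorB φ N) = Submodule.Quotient.mk (b ⊗ₜ[ℤ] f m)
  have : tmapAux (B := B) f (b ⊗ₜ[ℤ] m) = b ⊗ₜ[ℤ] f m := by simp [tmapAux]
  rw [this]

/-- The quotient map `A → A/J(A)` is a projective cover. -/
lemma mkQ_jac_cover : IsProjectiveCover A (A ⧸ jac A) (jac A).mkQ := by
  refine ⟨inferInstance, Submodule.mkQ_surjective _, ?_⟩
  intro L hL
  rw [Submodule.ker_mkQ] at hL
  by_contra hne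
  obtain ⟨m, hm, hLm⟩ := Ideal.exists_le_maximal (L : Ideal A) hne
  have hjac : jac A ≤ m := sInf_le ⟨bot_le, hm⟩
  have : (⊤ : Ideal A) ≤ m := hL ▸ sup_le hjac hLm
  exact hm.ne_top (top_le_iff.mp this)

end AuxStatement8

/-- If induction along `φ` preserves projective covers of finitely
generated modules, then `φ` is radical-preserving. -/
theorem statement_8 {A B : Type u} [Ring A] [Ring B] (φ : A →+* B)
    (h : ∀ (M P : Type u) [AddCommGroup M] [Module A M] [AddCommGroup P] [Module A P],
      Module.Finite A M → ∀ f : P →ₗ[A] M, IsProjectiveCover A M f →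
        ((∃ x : TensorB φ M, x ≠ 0) ∧ IsProjectiveCover B (TensorB φ M) (tmap φ f)) ∨
          ((∀ x : TensorB φ M, x = 0) ∧ (∀ x : TensorB φ P, x = 0))) :
    ∀ a ∈ jac A, φ a ∈ jac B := by
  intro a ha
  set f : A →ₗ[A] A ⧸ jac A := (jac A).mkQ with hf
  have hcover := mkQ_jac_cover (A := A)
  rcases h (A ⧸ jac A) A inferInstance f hcover with ⟨-, -, -, hsup⟩ | ⟨-, hzero⟩
  · -- case 1: tmap φ f is a projective cover, so its kernel is superfluous
    -- φ a lands in the kernel via iotT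
    have hker : iotT φ (φ a) ∈ LinearMap.ker (tmap φ f) := by
      rw [LinearMap.mem_ker]
      show tmap φ f (Submodule.Quotient.mk ((φ a) ⊗ₜ[ℤ] (1 : A))) = 0
      rw [tmap_mk]
      rw [show (0 : TensorB φ (A ⧸ jac A)) = Submodule.Quotient.mk 0 from rfl]
      change (Submodule.Quotient.mk (φ a ⊗ₜ[ℤ] f 1) :
        TensorProduct ℤ B (A ⧸ jac A) ⧸ TensorRel φ (A ⧸ jac A)) = Submodule.Quotient.mk 0
      rw [Submodule.Quotient.eq]
      have h1 : a • (f 1) = 0 := by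
        rw [hf, ← map_smul, smul_eq_mul, mul_one]
        exact (Submodule.Quotient.mk_eq_zero _).mpr ha
      refine Submodule.span_mono ?_ (Submodule.mem_span_singleton_self _)
      intro x hx
      rw [Set.mem_singleton_iff] at hx
      subst hx
      exact ⟨1, a, f 1, by rw [one_mul, h1, TensorProduct.tmul_zero, sub_zero]⟩
    -- show φ a belongs to every maximal left ideal of B
    show φ a ∈ sInf {J : Ideal B | ⊥ ≤ J ∧ J.IsMaximal}
    rw [Submodule.mem_sInf]
    rintro m ⟨-, hm⟩
    by_contra hnot
    have hsupm : (jac B ⊔ m : Ideal B) = m ⊔ Submodule.span B {φ a} ∨ True := Or.inr trivial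
    have htop : (m : Submodule B B) ⊔ Submodule.span B {φ a} = ⊤ :=
      (Ideal.isMaximal_def.mp hm).2 _ (lt_of_le_of_ne le_sup_left (fun hEq => hnot
        (hEq ▸ (le_sup_right (a := (m : Submodule B B))) (Submodule.mem_span_singleton_self _))))
    -- push through iotT
    have hmapK : Submodule.map (iotT φ) (Submodule.span B {φ a}) ≤
        LinearMap.ker (tmap φ f) := by
      rw [Submodule.map_span, Submodule.span_le]
      rintro x ⟨y, hy, rfl⟩
      rw [Set.mem_singleton_iff] at hy
      subst hy
      exact hker
    have hsupT : LinearMap.ker (tmap φ f) ⊔ Submodule.map (iotT φ) m = ⊤ := by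
      rw [eq_top_iff]
      have : Submodule.map (iotT φ) ⊤ = ⊤ :=
        Submodule.map_top (iotT φ) ▸ LinearMap.range_eq_top.mpr (iotT_surjective φ)
      calc (⊤ : Submodule B (TensorB φ A)) = Submodule.map (iotT φ) ⊤ := this.symm
        _ = Submodule.map (iotT φ) (m ⊔ Submodule.span B {φ a}) := by rw [htop]
        _ = Submodule.map (iotT φ) m ⊔ Submodule.map (iotT φ) (Submodule.span B {φ a}) :=
            Submodule.map_sup _ _ _
        _ ≤ Submodule.map (iotT φ) m ⊔ LinearMap.ker (tmap φ f) := sup_le_sup_left hmapK _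
        _ = LinearMap.ker (tmap φ f) ⊔ Submodule.map (iotT φ) m := sup_comm _ _
    have hmtop : Submodule.map (iotT φ) m = ⊤ := hsup _ hsupT
    have : (m : Submodule B B) = ⊤ := by
      rw [eq_top_iff]
      intro x _
      have : iotT φ x ∈ Submodule.map (iotT φ) m := hmtop ▸ Submodule.mem_top
      obtain ⟨y, hy, hyx⟩ := this
      rwa [← iotT_injective φ hyx]
    exact hm.ne_top this
  · -- case 2: B ⊗ A = 0 forces B trivial
    have h1 : (1 : B) = 0 := by
      have := hzero (iotT φ 1)
      calc (1 : B) = psiT φ (iotT φ 1) := (psiT_iotT φ 1).symm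
        _ = psiT φ 0 := by rw [this]
        _ = 0 := map_zero _
    have : φ a = 0 := by rw [← mul_one (φ a), h1, mul_zero]
    rw [this]
    exact zero_mem _
end

section
/- Let φ : A → B be a ring homomorphism with A semiperfect. Then Ker φ ⊆ J(A) if and only if B ⊗_A P ≠ 0 for every non-zero finitely generated projective left A-module P. -/
universe u

open Function CategoryTheory

/-! ### Auxiliary lemmas for statement 9 -/

section Aux9

variable {A : Type u} [Ring A]

theorem jac_mul_right' {a : A} (ha : a ∈ jac A) (r : A) : a * r ∈ jac A := by
  exact Ideal.mul_mem_right (I := Ideal.jacobson (⊥ : Ideal A)) r ha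

theorem jac_left_inv {a : A} (ha : a ∈ jac A) : ∃ z : A, z * (1 - a) = 1 := by
  obtain ⟨z, hz⟩ := Ideal.mem_jacobson_iff.1 ha (-1)
  rw [Ideal.mem_bot, sub_eq_zero] at hz
  rw [mul_neg_one, neg_mul] at hz
  exact ⟨z, by rw [mul_sub, mul_one, sub_eq_neg_add]; exact hz⟩

theorem isUnit_one_sub_jac {a : A} (ha : a ∈ jac A) : IsUnit (1 - a) := by
  obtain ⟨z, hz⟩ := jac_left_inv ha
  have hz' : z = 1 - -(z * a) := by
    have h1 : z - z * a = 1 := by rw [← hz, mul_sub, mul_one]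
    rw [sub_eq_iff_eq_add] at h1
    rw [sub_neg_eq_add]
    exact h1
  have hmem : -(z * a) ∈ jac A := neg_mem (Ideal.mul_mem_left _ z ha)
  obtain ⟨w, hw⟩ := jac_left_inv hmem
  rw [← hz'] at hw
  have hw2 : w = 1 - a := by
    calc w = w * (z * (1 - a)) := by rw [hz, mul_one]
    _ = w * z * (1 - a) := by rw [mul_assoc]
    _ = 1 - a := by rw [hw, one_mul]
  exact ⟨⟨1 - a, z, by rw [← hw2]; exact hw, hz⟩, rfl⟩

theorem jac_nakayama {P : Type u} [AddCommGroup P] [Module A P] (hfin : Module.Finite A P)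
    (h : ∀ p : P, p ∈ Submodule.span A {x : P | ∃ a ∈ jac A, ∃ m : P, x = a • m}) (p : P) :
    p = 0 := by
  classical
  obtain ⟨S, hS⟩ := Module.finite_def.mp hfin
  suffices H : ∀ (n : ℕ) (S : Finset P), S.card = n →
      Submodule.span A (↑S : Set P) = ⊤ → p = 0 from H S.card S rfl hS
  intro n
  induction n with
  | zero =>
    intro S hcard hspan
    rw [Finset.card_eq_zero] at hcard
    subst hcard
    rw [Finset.coe_empty, Submodule.span_empty] at hspan
    have hp : p ∈ (⊤ : Submodule A P) := Submodule.mem_top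
    rw [← hspan] at hp
    exact (Submodule.mem_bot A).1 hp
  | succ n ih =>
    intro S hcard hspan
    have hne : S.Nonempty := by rw [← Finset.card_pos, hcard]; omega
    obtain ⟨s, hs⟩ := hne
    set N := Submodule.span A (↑(S.erase s) : Set P) with hN
    have hgen : ∀ qq : P ⧸ N, ∃ r : A, r • (N.mkQ s) = qq := by
      intro qq
      obtain ⟨p', rfl⟩ := N.mkQ_surjective qq
      have hp' : p' ∈ Submodule.span A (insert s (↑(S.erase s) : Set P)) := by
        rw [← Finset.coe_insert, Finset.insert_erase hs, hspan]; exact Submodule.mem_top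
      obtain ⟨r, z, hz, hrz⟩ := Submodule.mem_span_insert.1 hp'
      refine ⟨r, ?_⟩
      rw [hrz, map_add, map_smul]
      have hz0 : N.mkQ z = 0 := by
        rw [Submodule.mkQ_apply, Submodule.Quotient.mk_eq_zero]; exact hz
      rw [hz0, add_zero]
    have hq : ∀ qq : P ⧸ N,
        qq ∈ Submodule.span A {x : P ⧸ N | ∃ a ∈ jac A, ∃ m : P ⧸ N, x = a • m} := by
      intro qq
      obtain ⟨p', rfl⟩ := N.mkQ_surjective qq
      have h2 : N.mkQ p' ∈ Submodule.map N.mkQ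
          (Submodule.span A {x : P | ∃ a ∈ jac A, ∃ m : P, x = a • m}) := ⟨p', h p', rfl⟩
      rw [Submodule.map_span] at h2
      refine Submodule.span_mono ?_ h2
      rintro x ⟨y, ⟨a, haj, m, rfl⟩, rfl⟩
      exact ⟨a, haj, N.mkQ m, by rw [map_smul]⟩
    have key : ∀ x ∈ Submodule.span A {x : P ⧸ N | ∃ a ∈ jac A, ∃ m : P ⧸ N, x = a • m},
        ∃ j ∈ jac A, x = j • (N.mkQ s) := by
      intro x hx
      induction hx using Submodule.span_induction with
      | mem x hx =>
        obtain ⟨a, haj, m, rfl⟩ := hx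
        obtain ⟨r, hr⟩ := hgen m
        exact ⟨a * r, jac_mul_right' haj r, by rw [mul_smul, hr]⟩
      | zero => exact ⟨0, (jac A).zero_mem, by rw [zero_smul]⟩
      | add x y hxm hym hx hy =>
        obtain ⟨j1, hj1, rfl⟩ := hx
        obtain ⟨j2, hj2, rfl⟩ := hy
        exact ⟨j1 + j2, (jac A).add_mem hj1 hj2, by rw [add_smul]⟩
      | smul r x hxm hx =>
        obtain ⟨j, hj, rfl⟩ := hx
        exact ⟨r * j, Ideal.mul_mem_left _ r hj, by rw [mul_smul]⟩
    obtain ⟨j, hj, hjs⟩ := key _ (hq (N.mkQ s))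
    have hzero : (1 - j) • (N.mkQ s) = 0 := by rw [sub_smul, one_smul, ← hjs, sub_self]
    obtain ⟨u, hu⟩ := isUnit_one_sub_jac hj
    have hs0 : N.mkQ s = 0 := by
      have h1 : ((↑u⁻¹ : A) * (1 - j)) • (N.mkQ s) = 0 := by rw [mul_smul, hzero, smul_zero]
      rw [← hu, Units.inv_mul, one_smul] at h1
      exact h1
    have hsN : s ∈ N := by rwa [Submodule.mkQ_apply, Submodule.Quotient.mk_eq_zero] at hs0
    have hspan' : Submodule.span A (↑(S.erase s) : Set P) = ⊤ := by
      refine le_antisymm le_top ?_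
      rw [← hspan]
      refine Submodule.span_le.2 ?_
      intro x hx
      by_cases hxs : x = s
      · subst hxs; exact hsN
      · exact Submodule.subset_span (by
          rw [Finset.coe_erase]
          exact ⟨Finset.mem_coe.1 hx, hxs⟩)
    exact ih (S.erase s) (by rw [Finset.card_erase_of_mem hs, hcard]; omega) hspan'

end Aux9

/-- For `A` semiperfect, `Ker φ ⊆ J(A)` iff every non-zero finitely
generated projective `A`-module is `φ`-nonvanishing. -/
theorem statement_9 {A B : Type u} [Ring A] [Ring B] (φ : A →+* B)
    (hA : IsSemiperfectRing A) :
    (∀ a : A, φ a = 0 → a ∈ jac A) ↔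
      ∀ (P : Type u) [AddCommGroup P] [Module A P], Module.Finite A P →
        Module.Projective A P → (∃ p : P, p ≠ 0) → ∃ x : TensorB φ P, x ≠ 0 := by
  constructor
  · -- Forward direction
    intro hker P _ _ hfin hproj hne
    obtain ⟨p₀, hp₀⟩ := hne
    by_contra h0
    push_neg at h0
    obtain ⟨s, hs⟩ := hproj.out
    have hcoef : ∀ p i : P, φ (s p i) = 0 := by
      intro p i
      classical
      let inner : P →ₗ[ℤ] B :=
        AddMonoidHom.toIntLinearMap
          (φ.toAddMonoidHom.comp ((Finsupp.applyAddHom i).comp s.toAddMonoidHom))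
      let g : B →ₗ[B] (P →ₗ[ℤ] B) := LinearMap.toSpanSingleton B _ inner
      let ψ : TensorProduct ℤ B P →ₗ[B] B := TensorProduct.AlgebraTensorModule.lift g
      have hψ : ∀ (b : B) (p' : P), ψ (b ⊗ₜ[ℤ] p') = b * φ (s p' i) := by
        intro b p'
        simp only [ψ, g, inner, TensorProduct.AlgebraTensorModule.lift_tmul,
          LinearMap.toSpanSingleton_apply, LinearMap.smul_apply, smul_eq_mul,
          AddMonoidHom.coe_toIntLinearMap, AddMonoidHom.coe_comp, Function.comp_apply,
          RingHom.toAddMonoidHom_eq_coe,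
          LinearMap.toAddMonoidHom_coe, Finsupp.applyAddHom_apply]
        rfl
      have hle : TensorRel φ P ≤ LinearMap.ker ψ := by
        rw [TensorRel, Submodule.span_le]
        rintro x ⟨b, a, m, rfl⟩
        rw [SetLike.mem_coe, LinearMap.mem_ker, map_sub, hψ, hψ]
        have hsm : s (a • m) = a • s m := s.map_smul a m
        rw [hsm, Finsupp.smul_apply, smul_eq_mul, map_mul, mul_assoc, sub_self]
      let L := Submodule.liftQ (TensorRel φ P) ψ hle
      have hL : L (Submodule.Quotient.mk ((1:B) ⊗ₜ[ℤ] p)) = φ (s p i) := by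
        rw [Submodule.liftQ_apply, hψ, one_mul]
      have hx0 : (Submodule.Quotient.mk ((1:B) ⊗ₜ[ℤ] p) :
          TensorProduct ℤ B P ⧸ TensorRel φ P) = 0 := h0 _
      rw [← hL, hx0, map_zero]
    have hjac : ∀ p i : P, s p i ∈ jac A := fun p i => hker _ (hcoef p i)
    have hmem : ∀ p : P, p ∈ Submodule.span A {x : P | ∃ a ∈ jac A, ∃ m : P, x = a • m} := by
      intro p
      have hp := hs p
      rw [Finsupp.linearCombination_apply] at hp
      rw [← hp, Finsupp.sum]
      exact Submodule.sum_mem _ fun i _ => Submodule.subset_span ⟨s p i, hjac p i, id i, rfl⟩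
    exact hp₀ (jac_nakayama hfin hmem p₀)
  · -- Reverse direction
    intro hP a haφ
    by_contra haj
    classical
    let Iker : Submodule A A :=
      { carrier := {x : A | φ x = 0}
        add_mem' := fun hx hy => by
          simp only [Set.mem_setOf_eq] at *
          rw [map_add, hx, hy, add_zero]
        zero_mem' := by simp
        smul_mem' := fun c x hx => by
          simp only [Set.mem_setOf_eq, smul_eq_mul] at *
          rw [map_mul, hx, mul_zero] }
    haveI : IsSemisimpleModule A (A ⧸ jac A) := hA.1
    set q := (jac A).mkQ with hq
    obtain ⟨C, hC⟩ := exists_isCompl (Submodule.map q Iker)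
    have hqa : q a ≠ 0 := by
      rw [hq, Submodule.mkQ_apply, Ne, Submodule.Quotient.mk_eq_zero]
      exact haj
    obtain ⟨ε, hε, c, hc, hsum⟩ := Submodule.mem_sup.1
      (show q 1 ∈ Submodule.map q Iker ⊔ C by rw [hC.sup_eq_top]; exact Submodule.mem_top)
    have key1 : ∀ y : A, q y ∈ Submodule.map q Iker → q y = y • ε := by
      intro y hy
      have h1 : q y = y • ε + y • c := by
        have h2 : q y = y • q 1 := by rw [← map_smul q y 1, smul_eq_mul, mul_one]
        rw [h2, ← hsum, smul_add]
      have h2 : y • c ∈ Submodule.map q Iker ⊓ C := by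
        constructor
        · have h3 : y • c = q y - y • ε := by rw [h1]; abel
          rw [h3]
          exact Submodule.sub_mem _ hy (Submodule.smul_mem _ y hε)
        · exact Submodule.smul_mem _ y hc
      rw [hC.inf_eq_bot] at h2
      rw [h1, (Submodule.mem_bot A).1 h2, add_zero]
    have hε0 : ε ≠ 0 := by
      intro h
      apply hqa
      rw [key1 a ⟨a, haφ, rfl⟩, h, smul_zero]
    obtain ⟨i₀, hi₀, hqi₀⟩ := hε
    have hidem0 : q (i₀ * i₀ - i₀) = 0 := by
      rw [map_sub, ← smul_eq_mul, map_smul, hqi₀, ← key1 i₀ ⟨i₀, hi₀, rfl⟩, hqi₀, sub_self]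
    have hidem : i₀ * i₀ - i₀ ∈ jac A := by
      rwa [hq, Submodule.mkQ_apply, Submodule.Quotient.mk_eq_zero] at hidem0
    obtain ⟨e, he, hej⟩ := hA.2 i₀ hidem
    have hee : e * e = e := he
    have hqe : q e = ε := by
      have h4 : q (e - i₀) = 0 := by
        rw [hq, Submodule.mkQ_apply, Submodule.Quotient.mk_eq_zero]; exact hej
      have h5 : q e - q i₀ = 0 := by rw [← map_sub]; exact h4
      rw [sub_eq_zero] at h5
      rw [h5, hqi₀]
    have he0 : e ≠ 0 := fun h => hε0 (by rw [← hqe, h, map_zero])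
    have ht : e * (e - i₀) * e ∈ jac A :=
      jac_mul_right' (Ideal.mul_mem_left _ e hej) e
    set t := e * (e - i₀) * e with hT
    obtain ⟨u, hu⟩ := isUnit_one_sub_jac ht
    have het : e * t = t := by
      calc e * t = (e * e) * (e - i₀) * e := by rw [hT, ← mul_assoc, ← mul_assoc]
      _ = t := by rw [hee, hT]
    have hte : t * e = t := by
      calc t * e = e * (e - i₀) * (e * e) := by rw [hT, mul_assoc]
      _ = t := by rw [hee, hT]
    have h1 : t = e - e * i₀ * e := by
      rw [hT, mul_sub, sub_mul, hee, hee]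
    have h1' : e * i₀ * e = e - t := by rw [h1, sub_sub_cancel]
    have hv : (1 - t) * ↑u⁻¹ = 1 := by rw [← hu]; exact u.mul_inv
    have claim : (e * i₀ * e) * (↑u⁻¹ * e) = e := by
      rw [h1']
      calc (e - t) * (↑u⁻¹ * e)
          = (e * (1 - t)) * (↑u⁻¹ * e) := by rw [mul_sub, mul_one, het]
        _ = e * ((1 - t) * ↑u⁻¹ * e) := by rw [mul_assoc, ← mul_assoc (1 - t)]
        _ = e := by rw [hv, one_mul, hee]
    have hφi : φ i₀ = 0 := hi₀
    have hφe : φ e = 0 := by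
      have h6 : φ e = φ ((e * i₀ * e) * (↑u⁻¹ * e)) := by rw [claim]
      rw [h6]
      simp [map_mul, hφi]
    set S : Submodule A A := Submodule.span A ({e} : Set A) with hSdef
    have hfix : ∀ x ∈ S, x * e = x := by
      intro x hx
      obtain ⟨cc, rfl⟩ := Submodule.mem_span_singleton.1 hx
      rw [smul_eq_mul, mul_assoc, hee]
    have hφS : ∀ x ∈ S, φ x = 0 := by
      intro x hx
      obtain ⟨cc, rfl⟩ := Submodule.mem_span_singleton.1 hx
      rw [smul_eq_mul, map_mul, hφe, mul_zero]
    haveI hfinS : Module.Finite A ↥S :=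
      Module.Finite.iff_fg.2 (Submodule.fg_span_singleton e)
    have hprojS : Module.Projective A ↥S := by
      refine Module.Projective.of_split (M := A)
        S.subtype ((LinearMap.toSpanSingleton A A e).codRestrict S ?_) ?_
      · intro x
        exact Submodule.mem_span_singleton.2 ⟨x, rfl⟩
      · ext x
        simp only [LinearMap.coe_comp, Function.comp_apply, LinearMap.codRestrict_apply,
          LinearMap.toSpanSingleton_apply, Submodule.coe_subtype, LinearMap.id_coe, id_eq,
          smul_eq_mul]
        exact hfix x.1 x.2
    set eS : ↥S := ⟨e, Submodule.mem_span_singleton_self e⟩ with heS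
    obtain ⟨xx, hxx⟩ := hP ↥S hfinS hprojS
      ⟨eS, fun h => he0 (by simpa [eS] using congrArg Subtype.val h)⟩
    apply hxx
    have hrel : ∀ z : TensorProduct ℤ B ↥S, z ∈ TensorRel φ ↥S := by
      intro z
      induction z using TensorProduct.induction_on with
      | zero => exact Submodule.zero_mem _
      | tmul b p =>
        have hpe : p = (p : A) • eS := by
          apply Subtype.ext
          simp only [heS, SetLike.val_smul, smul_eq_mul]
          exact (hfix p.1 p.2).symm
        have hrel0 : (b * φ (p : A)) ⊗ₜ[ℤ] eS - b ⊗ₜ[ℤ] ((p : A) • eS) ∈ TensorRel φ ↥S :=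
          Submodule.subset_span ⟨b, (p : A), eS, rfl⟩
        have hz : b ⊗ₜ[ℤ] p =
            -((b * φ (p : A)) ⊗ₜ[ℤ] eS - b ⊗ₜ[ℤ] ((p : A) • eS)) := by
          rw [hφS p.1 p.2, mul_zero, TensorProduct.zero_tmul, zero_sub, neg_neg, ← hpe]
        rw [hz]
        exact Submodule.neg_mem _ hrel0
      | add x y hx hy => exact Submodule.add_mem _ hx hy
    obtain ⟨z, rfl⟩ := Submodule.Quotient.mk_surjective (TensorRel φ ↥S) xx
    exact (Submodule.Quotient.mk_eq_zero _).2 (hrel z)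
end

section
/- Let φ : A → B be a ring homomorphism with A left perfect and Ker φ ⊆ J(A). Then B ⊗_A P ≠ 0 for every non-zero projective left A-module P (not necessarily finitely generated). -/
universe u

open Function CategoryTheory

/-! ### Auxiliary machinery: Koenig-style argument for left T-nilpotency -/

section KeyLemma

variable {A : Type u} [Ring A] {ι : Type u}

/-- One step of coordinate expansion. -/
def stepRel (T : ι → ι →₀ A) (s t : ι × A) : Prop :=
  t.1 ∈ (T s.1).support ∧ t.2 = s.2 * T s.1 t.1

/-- `n`-fold extension along `stepRel`. -/
def extRel (T : ι → ι →₀ A) : ℕ → ι × A → ι × A → Prop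
  | 0, s, t => t = s
  | n + 1, s, t => ∃ u, extRel T n s u ∧ stepRel T u t

lemma extRel_zero_iff {T : ι → ι →₀ A} {s t : ι × A} : extRel T 0 s t ↔ t = s := Iff.rfl

lemma extRel_zero_prop {T : ι → ι →₀ A} {n : ℕ} {s t : ι × A}
    (h : extRel T n s t) (hs : s.2 = 0) : t.2 = 0 := by
  induction n generalizing t with
  | zero => rw [extRel_zero_iff.mp h]; exact hs
  | succ n ih =>
    obtain ⟨u, hu, hstep⟩ := h
    rw [hstep.2, ih hu, zero_mul]

lemma extRel_succ_front {T : ι → ι →₀ A} {n : ℕ} {s t : ι × A} :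
    extRel T (n + 1) s t ↔ ∃ u, stepRel T s u ∧ extRel T n u t := by
  induction n generalizing t with
  | zero =>
    constructor
    · rintro ⟨u, hu, hstep⟩
      rw [extRel_zero_iff.mp hu] at hstep
      exact ⟨t, hstep, rfl⟩
    · rintro ⟨u, hstep, hu⟩
      rw [extRel_zero_iff.mp hu]
      exact ⟨s, rfl, hstep⟩
  | succ n ih =>
    constructor
    · rintro ⟨u, hu, hstep⟩
      obtain ⟨v, hv, hv'⟩ := ih.1 hu
      exact ⟨v, hv, u, hv', hstep⟩
    · rintro ⟨u, hstep, v, hv, hstep'⟩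
      exact ⟨v, ih.2 ⟨u, hstep, hv⟩, hstep'⟩

/-- There is a live (nonvanishing) `n`-step extension from `s`. -/
def LiveS (T : ι → ι →₀ A) (s : ι × A) (n : ℕ) : Prop :=
  ∃ t, extRel T n s t ∧ t.2 ≠ 0

lemma LiveS.of_succ {T : ι → ι →₀ A} {s : ι × A} {n : ℕ} (h : LiveS T s (n + 1)) :
    LiveS T s n := by
  obtain ⟨t, ⟨u, hu, hstep⟩, ht⟩ := h
  refine ⟨u, hu, fun h0 => ht ?_⟩
  rw [hstep.2, h0, zero_mul]

lemma LiveS.of_add {T : ι → ι →₀ A} {s : ι × A} {m : ℕ} :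
    ∀ k : ℕ, LiveS T s (m + k) → LiveS T s m := by
  intro k
  induction k with
  | zero => exact fun h => h
  | succ k ih => exact fun h => ih h.of_succ

lemma LiveS.mono {T : ι → ι →₀ A} {s : ι × A} {m n : ℕ} (hmn : m ≤ n) (h : LiveS T s n) :
    LiveS T s m := by
  obtain ⟨k, rfl⟩ := Nat.exists_eq_add_of_le hmn
  exact LiveS.of_add k h

lemma finset_pigeonhole {γ : Type u} (s : Finset γ) (Q : γ → ℕ → Prop)
    (hmono : ∀ j (m n : ℕ), m ≤ n → Q j n → Q j m)
    (h : ∀ n, ∃ j ∈ s, Q j n) : ∃ j ∈ s, ∀ n, Q j n := by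
  classical
  by_contra hc
  push_neg at hc
  choose f hf using hc
  obtain ⟨j, hj, hQ⟩ := h (s.sup fun j => if h : j ∈ s then f j h else 0)
  refine hf j hj (hmono j _ _ ?_ hQ)
  have := Finset.le_sup (f := fun j => if h : j ∈ s then f j h else 0) hj
  simpa [hj] using this

/-- A state all of whose extension levels are live. -/
def GoodS (T : ι → ι →₀ A) (s : ι × A) : Prop := ∀ n, LiveS T s n

lemma GoodS.ne_zero {T : ι → ι →₀ A} {s : ι × A} (h : GoodS T s) : s.2 ≠ 0 := by
  obtain ⟨t, ht, h2⟩ := h 0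
  rw [extRel_zero_iff.mp ht] at h2
  exact h2

lemma GoodS.step {T : ι → ι →₀ A} {s : ι × A} (h : GoodS T s) :
    ∃ t, stepRel T s t ∧ GoodS T t := by
  have key : ∀ n, ∃ i ∈ (T s.1).support, LiveS T (i, s.2 * T s.1 i) n := by
    intro n
    obtain ⟨t, het, ht⟩ := h (n + 1)
    obtain ⟨u, hsu, hut⟩ := extRel_succ_front.mp het
    refine ⟨u.1, hsu.1, t, ?_, ht⟩
    have hu : u = (u.1, s.2 * T s.1 u.1) := Prod.ext rfl hsu.2
    rwa [← hu]
  obtain ⟨i, hi, hL⟩ := finset_pigeonhole (T s.1).support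
    (fun i n => LiveS T (i, s.2 * T s.1 i) n) (fun j m n hmn => LiveS.mono hmn) key
  exact ⟨(i, s.2 * T s.1 i), ⟨hi, rfl⟩, hL⟩

lemma key_lemma {A : Type u} [Ring A] {ι : Type u}
    (hT : IsLeftTNilpotent (jac A : Set A))
    (e : (ι →₀ A) →ₗ[A] (ι →₀ A))
    (hJ : ∀ (z : ι →₀ A) (i : ι), e z i ∈ jac A)
    (x : ι →₀ A) (hx : e x = x) : x = 0 := by
  classical
  by_contra hx0
  let T : ι → ι →₀ A := fun j => e (Finsupp.single j 1)
  have hexp : ∀ (z : ι →₀ A) (i : ι), e z i = ∑ j ∈ z.support, z j * T j i := by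
    intro z i
    conv_lhs => rw [← Finsupp.sum_single z]
    rw [Finsupp.sum, map_sum, Finsupp.finset_sum_apply]
    refine Finset.sum_congr rfl fun j _ => ?_
    have h1 : Finsupp.single j (z j) = (z j) • Finsupp.single j (1 : A) := by
      rw [Finsupp.smul_single, smul_eq_mul, mul_one]
    rw [h1, map_smul, Finsupp.smul_apply, smul_eq_mul]
  have claim : ∀ (n : ℕ) (i : ι),
      x i ∈ AddSubmonoid.closure {r : A | ∃ j, extRel T n (j, x j) (i, r)} := by
    intro n
    induction n with
    | zero =>
      intro i
      exact AddSubmonoid.subset_closure ⟨i, rfl⟩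
    | succ n ih =>
      intro i
      have hxi := hexp x i
      rw [hx] at hxi
      rw [hxi]
      refine AddSubmonoid.sum_mem _ fun j _ => ?_
      refine AddSubmonoid.closure_induction
        (motive := fun r _ => r * T j i ∈
          AddSubmonoid.closure {r : A | ∃ j', extRel T (n + 1) (j', x j') (i, r)})
        ?_ ?_ ?_ (ih j)
      · intro r hr
        show r * T j i ∈ AddSubmonoid.closure {r : A | ∃ j', extRel T (n + 1) (j', x j') (i, r)}
        by_cases hTji : T j i = 0
        · rw [hTji, mul_zero]; exact AddSubmonoid.zero_mem _
        · obtain ⟨j', hj'⟩ := hr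
          exact AddSubmonoid.subset_closure
            ⟨j', (j, r), hj', Finsupp.mem_support_iff.mpr hTji, rfl⟩
      · show (0 : A) * T j i ∈
          AddSubmonoid.closure {r : A | ∃ j', extRel T (n + 1) (j', x j') (i, r)}
        rw [zero_mul]; exact AddSubmonoid.zero_mem _
      · intro r₁ r₂ _ _ h1 h2
        show (r₁ + r₂) * T j i ∈
          AddSubmonoid.closure {r : A | ∃ j', extRel T (n + 1) (j', x j') (i, r)}
        rw [add_mul]; exact AddSubmonoid.add_mem _ h1 h2
  have roots : ∀ n, ∃ j ∈ x.support, LiveS T (j, x j) n := by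
    intro n
    by_contra hno
    push_neg at hno
    apply hx0
    ext i
    show x i = 0
    have hsub : {r : A | ∃ j, extRel T n (j, x j) (i, r)} ⊆ {(0 : A)} := by
      rintro r ⟨j, hj⟩
      by_contra hr0
      have hxj : x j ≠ 0 := fun h0 => hr0 (extRel_zero_prop hj h0)
      exact (hno j (Finsupp.mem_support_iff.mpr hxj)) ⟨(i, r), hj, hr0⟩
    have hb : x i ∈ (⊥ : AddSubmonoid A) := by
      refine AddSubmonoid.closure_le.mpr ?_ (claim n i)
      intro r hr
      obtain rfl : r = 0 := hsub hr
      exact AddSubmonoid.zero_mem ⊥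
    simpa using hb
  obtain ⟨j₀, _, hGood⟩ := finset_pigeonhole x.support (fun j n => LiveS T (j, x j) n)
    (fun j m n hmn => LiveS.mono hmn) roots
  let g : {s : ι × A // GoodS T s} → {s : ι × A // GoodS T s} := fun s =>
    ⟨(GoodS.step s.2).choose, (GoodS.step s.2).choose_spec.2⟩
  have hg : ∀ s : {s : ι × A // GoodS T s}, stepRel T s.1 (g s).1 :=
    fun s => (GoodS.step s.2).choose_spec.1
  let seq : ℕ → {s : ι × A // GoodS T s} := fun n => g^[n] ⟨(j₀, x j₀), hGood⟩
  have hseq : ∀ n, stepRel T (seq n).1 (seq (n + 1)).1 := by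
    intro n
    have h1 : seq (n + 1) = g (seq n) := Function.iterate_succ_apply' g n _
    rw [h1]
    exact hg (seq n)
  let a : ℕ → A := fun n => match n with
    | 0 => (seq 0).1.2
    | (m + 1) => T (seq m).1.1 (seq (m + 1)).1.1
  have hmem : ∀ n, a n ∈ (jac A : Set A) := by
    intro n
    match n with
    | 0 =>
      show x j₀ ∈ jac A
      have h1 : e x j₀ ∈ jac A := hJ x j₀
      rwa [hx] at h1
    | (m + 1) => exact hJ _ _
  have hprod : ∀ n, ((List.range (n + 1)).map a).prod = (seq n).1.2 := by
    intro n
    induction n with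
    | zero =>
      rw [show List.range 1 = [0] from rfl]
      simp only [List.map_cons, List.map_nil, List.prod_cons, List.prod_nil, mul_one]
      rfl
    | succ n ih =>
      rw [List.range_succ, List.map_append, List.prod_append, ih]
      simp only [List.map_cons, List.map_nil, List.prod_cons, List.prod_nil, mul_one]
      exact ((hseq n).2).symm
  obtain ⟨n, hn⟩ := hT a hmem
  rw [hprod n] at hn
  exact (seq n).2.ne_zero hn

end KeyLemma

/-- For `A` left perfect and `Ker φ ⊆ J(A)`, every non-zero
projective `A`-module is `φ`-nonvanishing. -/
theorem statement_10 {A B : Type u} [Ring A] [Ring B] (φ : A →+* B)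
    (hA : IsLeftPerfectRing A) (hker : ∀ a : A, φ a = 0 → a ∈ jac A) :
    ∀ (P : Type u) [AddCommGroup P] [Module A P], Module.Projective A P →
      (∃ p : P, p ≠ 0) → ∃ x : TensorB φ P, x ≠ 0 := by
  classical
  intro P _ _ hproj hne
  obtain ⟨p, hp⟩ := hne
  obtain ⟨s, hs⟩ := Module.projective_def.mp hproj
  by_cases hcase : ∃ (w : P) (i : P), φ (s w i) ≠ 0
  · obtain ⟨w, i, hwi⟩ := hcase
    let gl : P →ₗ[ℤ] B :=
      (φ.toAddMonoidHom.comp ((Finsupp.applyAddHom i).comp s.toAddMonoidHom)).toIntLinearMap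
    have hgl : ∀ z : P, gl z = φ (s z i) := fun z => rfl
    have hgla : ∀ (a : A) (z : P), gl (a • z) = φ a * gl z := by
      intro a z
      rw [hgl, hgl, map_smul, Finsupp.smul_apply, smul_eq_mul, map_mul]
    let h₀ : TensorProduct ℤ B P →ₗ[B] B :=
      TensorProduct.AlgebraTensorModule.lift (LinearMap.toSpanSingleton B (P →ₗ[ℤ] B) gl)
    have h₀tmul : ∀ (b : B) (z : P), h₀ (b ⊗ₜ[ℤ] z) = b * gl z := by
      intro b z
      simp only [h₀, TensorProduct.AlgebraTensorModule.lift_tmul,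
        LinearMap.toSpanSingleton_apply, LinearMap.smul_apply, smul_eq_mul]
    have hle : TensorRel φ P ≤ LinearMap.ker h₀ := by
      rw [TensorRel, Submodule.span_le]
      rintro _ ⟨b, a, m, rfl⟩
      rw [SetLike.mem_coe, LinearMap.mem_ker, map_sub, h₀tmul, h₀tmul, hgla, mul_assoc]
      exact sub_self _
    refine ⟨Submodule.Quotient.mk ((1 : B) ⊗ₜ[ℤ] w), fun h0 => hwi ?_⟩
    have hmemrel : ((1 : B) ⊗ₜ[ℤ] w) ∈ TensorRel φ P := (Submodule.Quotient.mk_eq_zero _).mp h0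
    have hker0 := hle hmemrel
    rw [LinearMap.mem_ker, h₀tmul, one_mul, hgl] at hker0
    exact hker0
  · push_neg at hcase
    exfalso
    let e : (P →₀ A) →ₗ[A] (P →₀ A) := s ∘ₗ (Finsupp.linearCombination A (id : P → P))
    have hJ : ∀ (z : P →₀ A) (i : P), e z i ∈ jac A :=
      fun z i => hker _ (hcase (Finsupp.linearCombination A id z) i)
    have hx : e (s p) = s p := by
      show s (Finsupp.linearCombination A id (s p)) = s p
      rw [hs p]
    have hsp : s p ≠ 0 := by
      intro h0
      apply hp
      have h1 := hs p
      rw [h0, map_zero] at h1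
      exact h1.symm
    exact hsp (key_lemma hA.2 e hJ (s p) hx)
end

section
/- Let Λ be a semiprimary ring and M a left Λ-module with finite projective dimension n > 0, with minimal projective resolution 0 → P_n → ⋯ → P_0 → M → 0. Then Ext_Λ^n(M, top(P_n)) ≠ 0, where top(P_n) = P_n/J(Λ)P_n. Consequently the injective dimension of the semisimple module top(P_n) is at least n. -/
universe u

open Function CategoryTheory

/-! ### Auxiliary lemmas for Statement 17 -/

private lemma st17_nilp_zero (L : Type u) [Ring L] (P : Type u) [AddCommGroup P] [Module L P]
    (n : ℕ) (hn : IdealPowZero L (jac L) n)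
    (hT : ∀ x : P, x ∈ idealSMul L P (jac L) ⊤) : ∀ x : P, x = 0 := by
  set J := jac L with hJ
  set S : ℕ → Submodule L P := fun k => Submodule.span L
    {x | ∃ l : List L, l.length = k ∧ (∀ a ∈ l, a ∈ J) ∧ ∃ m : P, x = l.prod • m} with hS
  have step : ∀ k, S k ≤ S (k + 1) := by
    intro k
    rw [hS]
    rw [Submodule.span_le]
    rintro x ⟨l, hlenl, hmem, m, rfl⟩
    have key : ∀ m' : P, ∀ _ : m' ∈ idealSMul L P J ⊤, ∀ r : L,
        (l.prod * r) • m' ∈ S (k + 1) := by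
      intro m' hm'
      induction hm' using Submodule.span_induction with
      | mem x hx =>
        obtain ⟨a, ha, m'', -, rfl⟩ := hx
        intro r
        have : (l.prod * r) • (a • m'') = (l ++ [r * a]).prod • m'' := by
          rw [List.prod_append, List.prod_singleton, smul_smul, mul_assoc]
        rw [this]
        exact Submodule.subset_span ⟨l ++ [r * a], by simp [hlenl],
          by
            intro b hb
            rcases List.mem_append.1 hb with h | h
            · exact hmem b h
            · simp at h; subst h; exact Ideal.mul_mem_left _ _ ha,
          m'', rfl⟩
      | zero => intro r; simp
      | add x y hx hy ihx ihy =>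
        intro r
        rw [smul_add]
        exact (S (k+1)).add_mem (ihx r) (ihy r)
      | smul r' x hx ih =>
        intro r
        rw [smul_smul, mul_assoc]
        exact ih (r * r')
    have := key m (hT m) 1
    simpa using this
  have top_le : ∀ k, ∀ x : P, x ∈ S k := by
    intro k
    induction k with
    | zero => intro x; exact Submodule.subset_span ⟨[], rfl, by simp, x, by simp⟩
    | succ k ih => intro x; exact step k (ih x)
  have bot : S n ≤ ⊥ := by
    rw [hS, Submodule.span_le]
    rintro x ⟨l, hlenl, hmem, m, rfl⟩
    have hprod : l.prod = 0 := by
      have ha : ∀ i, l.getD i 0 ∈ J := by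
        intro i
        by_cases h : i < l.length
        · rw [List.getD_eq_getElem l 0 h]; exact hmem _ (List.getElem_mem h)
        · rw [List.getD_eq_default l 0 (le_of_not_gt h)]; exact J.zero_mem
      have := hn (fun i => l.getD i 0) ha
      have heq : (List.range n).map (fun i => l.getD i 0) = l := by
        apply List.ext_getElem
        · simp [hlenl]
        · intro i h1 h2
          simp [List.getD_eq_getElem l 0 h2, List.getElem?_eq_getElem h2]
      rwa [heq] at this
    simp [hprod]
  intro x
  simpa using bot (top_le n x)

private lemma st17_extend_along (L : Type u) [Ring L] {X Y Q : ModuleCat.{u} L}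
    (hQ : Injective Q) (v : X ⟶ Y) (h : ↥X →ₗ[L] ↥Q)
    (hk : ∀ x : ↥X, v x = 0 → h x = 0) :
    ∃ g : ↥Y →ₗ[L] ↥Q, ∀ x, g (v x) = h x := by
  haveI := hQ
  set K := LinearMap.ker (v.hom : ↥X →ₗ[L] ↥Y) with hK
  let X' : ModuleCat.{u} L := ModuleCat.of L (↥X ⧸ K)
  let f : X' ⟶ Y := ModuleCat.ofHom (Submodule.liftQ K (v.hom : ↥X →ₗ[L] ↥Y) le_rfl)
  haveI : Mono f := (ModuleCat.mono_iff_injective f).2 (by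
    have := Submodule.ker_liftQ_eq_bot K (v.hom : ↥X →ₗ[L] ↥Y) le_rfl le_rfl
    exact LinearMap.ker_eq_bot.1 this)
  let h' : X' ⟶ Q := ModuleCat.ofHom (Submodule.liftQ K h (fun x hx => hk x hx))
  refine ⟨(Injective.factorThru h' f).hom, fun x => ?_⟩
  have h2 : (f ≫ Injective.factorThru h' f) ((K.mkQ x : X')) = h' (K.mkQ x) := by
    rw [Injective.comp_factorThru]
  calc (Injective.factorThru h' f) (v x)
      = (f ≫ Injective.factorThru h' f) ((K.mkQ x : X')) := rfl
    _ = h' (K.mkQ x) := h2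
    _ = h x := rfl

private lemma st17_ext_vanish (L : Type u) [Ring L]
    (P : ℕ → ModuleCat.{u} L) (d : ∀ i : ℕ, P (i + 1) ⟶ P i)
    (hproj : ∀ i, Projective (P i))
    (hex : ∀ i, ∀ y : P (i + 1), d i y = 0 ↔ ∃ x : P (i + 2), d (i + 1) x = y) :
    ∀ n (Q : ModuleCat.{u} L), injDimLE L n Q → ∀ p, n ≤ p →
    ∀ h : ↥(P (p+1)) →ₗ[L] ↥Q, (∀ x : ↥(P (p+2)), h (d (p+1) x) = 0) →
    ∃ g : ↥(P p) →ₗ[L] ↥Q, h = g ∘ₗ ((d p).hom : ↥(P (p+1)) →ₗ[L] ↥(P p)) := by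
  intro n
  induction n with
  | zero =>
    intro Q hQ p _ h hvan
    obtain ⟨g, hg⟩ := st17_extend_along L hQ (d p) h (by
      intro x hx
      obtain ⟨y, hy⟩ := (hex p x).1 hx
      rw [← hy]; exact hvan y)
    exact ⟨g, by ext x; exact (hg x).symm⟩
  | succ n ih =>
    intro Q hQ p hnp h hvan
    obtain ⟨q, rfl⟩ : ∃ q, p = q + 1 := ⟨p - 1, by omega⟩
    obtain ⟨I, C, ι, π, hI, hιinj, hπsurj, hcomp, hexact, hC⟩ := hQ
    obtain ⟨k, hk⟩ := st17_extend_along L hI (d (q+1))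
      ((ι.hom : ↥Q →ₗ[L] ↥I) ∘ₗ h) (by
        intro x hx
        obtain ⟨y, hy⟩ := (hex (q+1) x).1 hx
        simp only [LinearMap.comp_apply]
        rw [← hy, hvan y, map_zero])
    obtain ⟨g', hg'⟩ := ih C hC q (by omega)
      ((π.hom : ↥I →ₗ[L] ↥C) ∘ₗ k) (by
        intro x
        simp only [LinearMap.comp_apply]
        rw [hk x]
        exact hcomp (h x))
    haveI := hproj q
    haveI : Epi π := (ModuleCat.epi_iff_surjective π).2 hπsurj
    let g'c : P q ⟶ C := ModuleCat.ofHom g'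
    let g'' : P q ⟶ I := Projective.factorThru g'c π
    have hg'' : ∀ y : ↥(P q), π (g'' y) = g' y := fun y => by
      have := congrArg (fun (u : P q ⟶ C) => u y) (Projective.factorThru_comp g'c π)
      exact this
    set θ : ↥(P (q+1)) →ₗ[L] ↥I :=
      k - (g''.hom : ↥(P q) →ₗ[L] ↥I) ∘ₗ ((d q).hom : ↥(P (q+1)) →ₗ[L] ↥(P q)) with hθ
    have hθmem : ∀ x, θ x ∈ LinearMap.range (ι.hom : ↥Q →ₗ[L] ↥I) := by
      intro x
      have hπθ : π (θ x) = 0 := by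
        have h1 : π (k x) = g' (d q x) := by
          have := congrArg (fun f : ↥(P (q+1)) →ₗ[L] ↥C => f x) hg'
          simpa using this
        simp [hθ, map_sub, h1, hg'']
      exact hexact (θ x) hπθ
    let eQ : ↥Q ≃ₗ[L] LinearMap.range (ι.hom : ↥Q →ₗ[L] ↥I) :=
      LinearEquiv.ofInjective (ι.hom : ↥Q →ₗ[L] ↥I) hιinj
    let g : ↥(P (q+1)) →ₗ[L] ↥Q :=
      (eQ.symm : LinearMap.range (ι.hom : ↥Q →ₗ[L] ↥I) →ₗ[L] ↥Q) ∘ₗ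
        (θ.codRestrict (LinearMap.range (ι.hom : ↥Q →ₗ[L] ↥I)) hθmem)
    have hιg : ∀ x, ι (g x) = θ x := by
      intro x
      have h1 : (↑(eQ (eQ.symm ⟨θ x, hθmem x⟩)) : ↥I) = θ x := by
        rw [eQ.apply_symm_apply]
      have h2 : (↑(eQ (eQ.symm ⟨θ x, hθmem x⟩)) : ↥I)
          = (ι.hom : ↥Q →ₗ[L] ↥I) (eQ.symm ⟨θ x, hθmem x⟩) :=
        LinearEquiv.ofInjective_apply _ _
      exact h2 ▸ h1
    refine ⟨g, ?_⟩
    apply LinearMap.ext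
    intro x
    apply hιinj
    have hdd : (d q) ((d (q+1)) x) = 0 := (hex q _).2 ⟨x, rfl⟩
    calc ι (h x) = k (d (q+1) x) := (hk x).symm
      _ = θ (d (q+1) x) + g'' (d q (d (q+1) x)) := by simp [hθ]
      _ = θ (d (q+1) x) := by rw [hdd, map_zero, add_zero]
      _ = ι (g (d (q+1) x)) := (hιg _).symm

/-- For a module `M` of finite projective dimension `n = m + 1 > 0`
over a semiprimary ring with minimal projective resolution
`0 → P (m+1) → ⋯ → P 0 → M → 0`, the `n`-th Ext group `Ext^n(M, top (P n))`
(computed from the resolution as `Hom(P n, top (P n))` modulo maps factoring through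
`d m`) is non-zero; consequently `injdim (top (P n)) ≥ n`. -/
theorem statement_17 (L : Type u) [Ring L] (hsp : IsSemiprimaryRing' L)
    (M : ModuleCat.{u} L) (m : ℕ) (hpd : projDim L M = ((m + 1 : ℕ) : ℕ∞))
    (P : ℕ → ModuleCat.{u} L) (d : ∀ i : ℕ, P (i + 1) ⟶ P i) (e : P 0 ⟶ M)
    (hproj : ∀ i, Projective (P i))
    (hsurj : Function.Surjective e)
    (hex0 : ∀ y : P 0, e y = 0 ↔ ∃ x : P 1, d 0 x = y)
    (hex : ∀ i, ∀ y : P (i + 1), d i y = 0 ↔ ∃ x : P (i + 2), d (i + 1) x = y)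
    (hmin0 : Superfluous L (P 0) (LinearMap.ker e.hom))
    (hmin : ∀ i, Superfluous L (P (i + 1)) (LinearMap.ker (d i).hom))
    (hlen : ∀ i, m + 1 < i → ∀ x : P i, x = 0)
    (hne : ∃ x : P (m + 1), x ≠ 0) :
    (∃ h : ↥(P (m + 1)) →ₗ[L]
        (↥(P (m + 1)) ⧸ idealSMul L (P (m + 1)) (jac L) ⊤),
      ∀ g : ↥(P m) →ₗ[L] (↥(P (m + 1)) ⧸ idealSMul L (P (m + 1)) (jac L) ⊤),
        h ≠ g ∘ₗ ((d m).hom : ↥(P (m + 1)) →ₗ[L] ↥(P m))) ∧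
    ((m + 1 : ℕ) : ℕ∞) ≤ injDim L (ModuleCat.of L
      (↥(P (m + 1)) ⧸ idealSMul L (P (m + 1)) (jac L) ⊤)) := by
  obtain ⟨-, n, hnil⟩ := hsp
  set Qs := idealSMul L (P (m+1)) (jac L) ⊤ with hQs
  set pr : ↥(P (m + 1)) →ₗ[L] (↥(P (m + 1)) ⧸ Qs) := Qs.mkQ with hpr
  have hsup : Superfluous L (P m)
      (LinearMap.range ((d m).hom : ↥(P (m+1)) →ₗ[L] ↥(P m))) := by
    cases m with
    | zero =>
      have hr : LinearMap.range ((d 0).hom : ↥(P 1) →ₗ[L] ↥(P 0))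
          = LinearMap.ker (e.hom : ↥(P 0) →ₗ[L] ↥M) := by
        ext y
        constructor
        · rintro ⟨x, rfl⟩
          exact (hex0 _).2 ⟨x, rfl⟩
        · intro hy
          exact (hex0 y).1 hy
      rw [hr]; exact hmin0
    | succ k =>
      have hr : LinearMap.range ((d (k+1)).hom : ↥(P (k+2)) →ₗ[L] ↥(P (k+1)))
          = LinearMap.ker ((d k).hom : ↥(P (k+1)) →ₗ[L] ↥(P k)) := by
        ext y
        constructor
        · rintro ⟨x, rfl⟩
          exact (hex k _).2 ⟨x, rfl⟩
        · intro hy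
          exact (hex k y).1 hy
      rw [hr]; exact hmin k
  have key1 : ∀ g : ↥(P m) →ₗ[L] (↥(P (m + 1)) ⧸ Qs),
      pr ≠ g ∘ₗ ((d m).hom : ↥(P (m + 1)) →ₗ[L] ↥(P m)) := by
    intro g hg
    have hsup_top : LinearMap.range ((d m).hom : ↥(P (m+1)) →ₗ[L] ↥(P m))
        ⊔ LinearMap.ker g = ⊤ := by
      rw [eq_top_iff]
      intro x _
      obtain ⟨z, hz⟩ := Qs.mkQ_surjective (g x)
      have hz' : g ((d m) z) = g x := by
        have : pr z = g ((d m) z) := by rw [hg]; rfl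
        rw [← this]
        exact hz
      have hmem : x - (d m) z ∈ LinearMap.ker g := by
        simp [LinearMap.mem_ker, map_sub, hz']
      have : x = (d m) z + (x - (d m) z) := by abel
      rw [this]
      exact Submodule.add_mem_sup ⟨z, rfl⟩ hmem
    have hker := hsup _ hsup_top
    have hzero : ∀ z : ↥(P (m+1)), pr z = 0 := by
      intro z
      have h1 : g ((d m) z) = 0 := by
        have : (d m) z ∈ LinearMap.ker g := by rw [hker]; trivial
        exact this
      have : pr z = g ((d m) z) := by rw [hg]; rfl
      rw [this, h1]
    have hmemT : ∀ x : ↥(P (m+1)), x ∈ Qs := by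
      intro x
      exact (Submodule.Quotient.mk_eq_zero Qs).1 (hzero x)
    obtain ⟨x0, hx0⟩ := hne
    exact hx0 (st17_nilp_zero L (↥(P (m+1))) n hnil hmemT x0)
  refine ⟨⟨pr, key1⟩, ?_⟩
  apply le_sInf
  rintro b ⟨nn, hnn, rfl⟩
  simp only [Set.mem_setOf_eq] at hnn
  rw [Nat.cast_le]
  by_contra hlt
  push_neg at hlt
  obtain ⟨g, hgeq⟩ := st17_ext_vanish L P d hproj hex nn _ hnn m (by omega) pr (by
    intro x
    have hx0 : x = (0 : ↥(P (m+2))) := hlen (m+2) (by omega) x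
    rw [hx0, map_zero, map_zero])
  exact key1 g hgeq
end
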